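/- Let λ > 0, ρ > 0 and τ, σ, μ ∈ ℝ, and let h₂, h₁, h₀ ∈ ℝ satisfy ρh₂ = (1 − h₂)²/λ − τ, ρh₁ = μh₂ − (1 − h₂)h₁/λ, and ρh₀ = (σ²/2)h₂ + μh₁ + h₁²/(2λ). Then V(z) := ½h₂z² + h₁z + h₀ satisfies, for every z ∈ ℝ, ρV(z) = (σ²/2)V″(z) + μV′(z) + (z − V′(z))²/(2λ) − (τ/2)z². -/

import Mathlib

theorem stmt17 (lam ρ τ σ μ : ℝ) (hlam : 0 < lam) (hρ : 0 < ρ)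
    (h₂ h₁ h₀ : ℝ)
    (e2 : ρ * h₂ = (1 - h₂) ^ 2 / lam - τ)
    (e1 : ρ * h₁ = μ * h₂ - (1 - h₂) * h₁ / lam)
    (e0 : ρ * h₀ = σ ^ 2 / 2 * h₂ + μ * h₁ + h₁ ^ 2 / (2 * lam)) :
    let V : ℝ → ℝ := fun z => (1 / 2) * h₂ * z ^ 2 + h₁ * z + h₀
    ∀ z : ℝ,
      ρ * V z = σ ^ 2 / 2 * deriv (deriv V) z + μ * deriv V z
          + (z - deriv V z) ^ 2 / (2 * lam) - τ / 2 * z ^ 2 := by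
  intro V z
  have hd : deriv V = fun z => h₂ * z + h₁ := by
    funext x
    have : HasDerivAt V (h₂ * x + h₁) x := by
      have := (((hasDerivAt_pow 2 x).const_mul ((1:ℝ)/2 * h₂)).add
        ((hasDerivAt_id x).const_mul h₁)).add_const h₀
      exact this.congr_deriv (by simp; ring)
    exact this.deriv
  have hdd : deriv (deriv V) z = h₂ := by
    rw [hd]
    have : HasDerivAt (fun x : ℝ => h₂ * x + h₁) h₂ z := by
      simpa using ((hasDerivAt_id z).const_mul h₂).add_const h₁
    exact this.deriv
  rw [hdd, hd]
  simp only [V]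
  linear_combination (z ^ 2 / 2) * e2 + z * e1 + e0
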